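/- Let d ≥ 1, L > 0, μ > 0, and let f : ℝ^d → ℝ be L-smooth (differentiable with ‖∇f(x) − ∇f(y)‖ ≤ L‖x − y‖ for all x, y) and μ-strongly convex ((μ/2)‖x − y‖² ≤ f(x) − f(y) − ⟨∇f(y), x − y⟩ for all x, y). Let γ > 0, p > 0, η ≥ 1, α > 0, and β be real parameters with β·p·η^{−1} − 1 ≠ 0; set θ := (p·η^{−1} − 1)/(β·p·η^{−1} − 1) and assume θ > 0. Let x, x_f, x* ∈ ℝ^d, set x_g := θ·x_f + (1 − θ)·x, let ĝ : Ω → ℝ^d be a square-integrable random vector on a probability space (Ω, F, P), and define the random points x_f⁺ := x_g − p·γ·ĝ and x⁺ := η·x_f⁺ + (p − η)·x_f + (1 − p)(1 − β)·x + (1 − p)·β·x_g. Then E[‖x⁺ − x*‖²] ≤ (1 + α·p·γ·η)(1 − β)‖x − x*‖² + (1 + α·p·γ·η)·β·‖x_g − x*‖² + (1 + α·p·γ·η)(β² − β)‖x − x_g‖² + p²·η²·γ²·E[‖ĝ‖²] − 2·η²·γ·⟨∇f(x_g), x_g + (p·η^{−1} − 1)·x_f − η^{−1}·p·x*⟩ +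 (p·η·γ/α)·‖E[ĝ] − ∇f(x_g)‖². -/

import Mathlib

open MeasureTheory RealInnerProductSpace

theorem accelerated_step_recursion {d : ℕ} (hd : 1 ≤ d) (L μ : ℝ) (hL : 0 < L) (hμ : 0 < μ)
    (f : EuclideanSpace ℝ (Fin d) → ℝ)
    (hdiff : Differentiable ℝ f)
    (hsmooth : ∀ x y : EuclideanSpace ℝ (Fin d),
      ‖gradient f x - gradient f y‖ ≤ L * ‖x - y‖)
    (hsc : ∀ x y : EuclideanSpace ℝ (Fin d),
      μ / 2 * ‖x - y‖ ^ 2 ≤ f x - f y - ⟪gradient f y, x - y⟫)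
    (γ p η α β θ : ℝ) (hγ : 0 < γ) (hp : 0 < p) (hη : 1 ≤ η) (hα : 0 < α)
    (hden : β * p * η⁻¹ - 1 ≠ 0)
    (hθdef : θ = (p * η⁻¹ - 1) / (β * p * η⁻¹ - 1)) (hθ : 0 < θ)
    (x xf xstar : EuclideanSpace ℝ (Fin d))
    {Ω : Type*} [MeasurableSpace Ω] (P : Measure Ω) [IsProbabilityMeasure P]
    (g : Ω → EuclideanSpace ℝ (Fin d)) (hg : MemLp g 2 P)
    (xg : EuclideanSpace ℝ (Fin d)) (hxg : xg = θ • xf + (1 - θ) • x) :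
    ∫ ω, ‖(η • (xg - (p * γ) • g ω) + (p - η) • xf + ((1 - p) * (1 - β)) • x +
          ((1 - p) * β) • xg) - xstar‖ ^ 2 ∂P ≤
      (1 + α * p * γ * η) * (1 - β) * ‖x - xstar‖ ^ 2 +
        (1 + α * p * γ * η) * β * ‖xg - xstar‖ ^ 2 +
        (1 + α * p * γ * η) * (β ^ 2 - β) * ‖x - xg‖ ^ 2 +
        p ^ 2 * η ^ 2 * γ ^ 2 * ∫ ω, ‖g ω‖ ^ 2 ∂P -
        2 * η ^ 2 * γ * ⟪gradient f xg, xg + (p * η⁻¹ - 1) • xf - (η⁻¹ * p) • xstar⟫ +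
        p * η * γ / α * ‖(∫ ω, g ω ∂P) - gradient f xg‖ ^ 2 := by
  have hη0 : (0:ℝ) < η := lt_of_lt_of_le one_pos hη
  have hηne : η ≠ 0 := ne_of_gt hη0
  have hαne : α ≠ 0 := ne_of_gt hα
  have hθη : θ * (β * p - η) = p - η := by
    have h1 : θ * (β * p * η⁻¹ - 1) = p * η⁻¹ - 1 := by
      rw [hθdef, div_mul_cancel₀ _ hden]
    field_simp at h1
    linarith
  set v : EuclideanSpace ℝ (Fin d) := gradient f xg with hv
  set z : EuclideanSpace ℝ (Fin d) := β • xg + (1 - β) • x - xstar with hzdef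
  set m : EuclideanSpace ℝ (Fin d) := ∫ ω, g ω ∂P with hm
  -- identity 1 : the integrand vector
  have hid1 : ∀ c : EuclideanSpace ℝ (Fin d),
      (η • (xg - (p * γ) • c) + (p - η) • xf + ((1 - p) * (1 - β)) • x +
          ((1 - p) * β) • xg) - xstar = z - (p * γ * η) • c := by
    intro c
    rw [hzdef, hxg]
    match_scalars <;>
      first
        | ring1
        | linear_combination hθη
        | linear_combination -hθη
  -- identity 2 : the gradient direction
  have hu : xg + (p * η⁻¹ - 1) • xf - (η⁻¹ * p) • xstar = (η⁻¹ * p) • z := by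
    have h : η • (xg + (p * η⁻¹ - 1) • xf - (η⁻¹ * p) • xstar) = p • z := by
      rw [hzdef, hxg]
      match_scalars <;> field_simp <;>
        first
          | ring1
          | linear_combination hθη
          | linear_combination -hθη
    calc xg + (p * η⁻¹ - 1) • xf - (η⁻¹ * p) • xstar
        = η⁻¹ • (η • (xg + (p * η⁻¹ - 1) • xf - (η⁻¹ * p) • xstar)) :=
          (inv_smul_smul₀ hηne _).symm
      _ = η⁻¹ • (p • z) := by rw [h]
      _ = (η⁻¹ * p) • z := (smul_smul _ _ _)
  have hinner : ⟪v, xg + (p * η⁻¹ - 1) • xf - (η⁻¹ * p) • xstar⟫ = (η⁻¹ * p) * ⟪v, z⟫ := by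
    rw [hu, real_inner_smul_right]
  -- norm identity for the convex combination
  have hnz : (1 - β) * ‖x - xstar‖ ^ 2 + β * ‖xg - xstar‖ ^ 2 + (β ^ 2 - β) * ‖x - xg‖ ^ 2
      = ‖z‖ ^ 2 := by
    have e1 : z = β • (xg - xstar) + (1 - β) • (x - xstar) := by rw [hzdef]; module
    have e2 : x - xg = (x - xstar) - (xg - xstar) := by abel
    rw [e1, e2]
    set a := x - xstar
    set b := xg - xstar
    rw [← real_inner_self_eq_norm_sq, ← real_inner_self_eq_norm_sq,
      ← real_inner_self_eq_norm_sq, ← real_inner_self_eq_norm_sq]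
    simp only [inner_sub_left, inner_sub_right, inner_add_left, inner_add_right,
      real_inner_smul_left, real_inner_smul_right]
    rw [real_inner_comm b a]
    ring
  -- integrability
  have hgi : Integrable g P := hg.integrable (by norm_num)
  have hgsq : Integrable (fun ω => ‖g ω‖ ^ 2) P := hg.norm.integrable_sq
  have hzin : Integrable (fun ω => (⟪z, g ω⟫ : ℝ)) P := hgi.const_inner z
  -- expand the LHS integral
  have e : ∀ ω, ‖(η • (xg - (p * γ) • g ω) + (p - η) • xf + ((1 - p) * (1 - β)) • x +
          ((1 - p) * β) • xg) - xstar‖ ^ 2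
      = ‖z‖ ^ 2 - 2 * (p * γ * η) * ⟪z, g ω⟫ + (p * γ * η) ^ 2 * ‖g ω‖ ^ 2 := by
    intro ω
    rw [hid1 (g ω), norm_sub_sq_real, real_inner_smul_right, norm_smul]
    rw [mul_pow, Real.norm_eq_abs, sq_abs]
    ring
  have hLHS : ∫ ω, ‖(η • (xg - (p * γ) • g ω) + (p - η) • xf + ((1 - p) * (1 - β)) • x +
          ((1 - p) * β) • xg) - xstar‖ ^ 2 ∂P
      = ‖z‖ ^ 2 - 2 * (p * γ * η) * ⟪z, m⟫ + (p * γ * η) ^ 2 * ∫ ω, ‖g ω‖ ^ 2 ∂P := by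
    have h1 : Integrable (fun ω => ‖z‖ ^ 2 - 2 * (p * γ * η) * ⟪z, g ω⟫) P :=
      (integrable_const _).sub (hzin.const_mul _)
    have h2 : Integrable (fun ω => (p * γ * η) ^ 2 * ‖g ω‖ ^ 2) P := hgsq.const_mul _
    simp only [e]
    rw [integral_add h1 h2, integral_sub (integrable_const _) (hzin.const_mul _),
      integral_const, integral_const_mul, integral_const_mul, integral_inner hgi,
      probReal_univ]
    simp [hm]
  rw [hLHS, hinner]
  -- key Young-type inequality
  have hkey0 : (0:ℝ) ≤ (p * γ * η) / α * ‖α • z + (m - v)‖ ^ 2 := by positivity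
  have hexp : ‖α • z + (m - v)‖ ^ 2
      = α ^ 2 * ‖z‖ ^ 2 + 2 * α * (⟪z, m⟫ - ⟪z, v⟫) + ‖m - v‖ ^ 2 := by
    rw [norm_add_sq_real, real_inner_smul_left, norm_smul, mul_pow, Real.norm_eq_abs,
      sq_abs, inner_sub_right]
    ring
  have hvz : ⟪v, z⟫ = ⟪z, v⟫ := real_inner_comm z v
  have hgradterm : 2 * η ^ 2 * γ * ((η⁻¹ * p) * ⟪v, z⟫) = 2 * (p * γ * η) * ⟪z, v⟫ := by
    rw [hvz]
    field_simp
  have hsum : (1 + α * p * γ * η) * (1 - β) * ‖x - xstar‖ ^ 2 +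
        (1 + α * p * γ * η) * β * ‖xg - xstar‖ ^ 2 +
        (1 + α * p * γ * η) * (β ^ 2 - β) * ‖x - xg‖ ^ 2
      = (1 + α * p * γ * η) * ‖z‖ ^ 2 := by
    rw [← hnz]; ring
  have hkey : (p * γ * η) / α * ‖α • z + (m - v)‖ ^ 2
      = α * (p * γ * η) * ‖z‖ ^ 2 + 2 * (p * γ * η) * (⟪z, m⟫ - ⟪z, v⟫) +
        (p * γ * η) / α * ‖m - v‖ ^ 2 := by
    rw [hexp]
    field_simp
  rw [hgradterm, hsum]
  have h2 : (0:ℝ) ≤ α * (p * γ * η) * ‖z‖ ^ 2 + 2 * (p * γ * η) * (⟪z, m⟫ - ⟪z, v⟫) +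
      p * γ * η / α * ‖m - v‖ ^ 2 := by
    rw [← hkey]; exact hkey0
  ring_nf
  ring_nf at h2
  linarith [h2]
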